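/- arXiv:1811.11159 — 2 statements merged into one kernel-verified Lean document; each statement's English description precedes it below -/
import Mathlib

section
/- Let Γ be a finite group, X a ℤ[Γ]-module that is finite free as a ℤ-module, and Y ⊆ X a Γ-stable subgroup. Define the norm map N : X → X by N(x) = Σ_{γ ∈ Γ} γ·x. Then the kernel of the composite map Y → X → (X_Γ)_free (where X_Γ is the module of Γ-coinvariants and (·)_free denotes the quotient by the torsion subgroup) is exactly {y ∈ Y : N(y) = 0}. -/
/-- For a finite group `Γ`, a `ℤ[Γ]`-module `X` that is finite free over `ℤ`,
and a `Γ`-stable subgroup `Y ⊆ X`, the kernel of the composite `Y → X_Γ → (X_Γ)_free`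
(coinvariants followed by the torsion-free quotient) is `{y ∈ Y : N(y) = 0}` where
`N(x) = ∑ γ, γ • x`.  An element of `Y` maps to `0` in `(X_Γ)_free` iff its class in the
coinvariants `X ⧸ C` is torsion. -/
theorem stmt0 (Γ : Type*) [Group Γ] [Fintype Γ]
    (X : Type*) [AddCommGroup X] [Module ℤ X]
    [Module.Free ℤ X] [Module.Finite ℤ X]
    [DistribMulAction Γ X]
    (Y : AddSubgroup X) (hY : ∀ (γ : Γ) (y : X), y ∈ Y → γ • y ∈ Y)
    (C : Submodule ℤ X)
    (hC : C = Submodule.span ℤ {z : X | ∃ (γ : Γ) (x : X), z = x - γ • x}) :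
    ∀ y ∈ Y,
      ((Submodule.Quotient.mk y : X ⧸ C) ∈ Submodule.torsion ℤ (X ⧸ C)) ↔
        ∑ γ : Γ, γ • y = 0 := by
  -- bridge between the `zsmul` action and the given module action (they agree)
  have bridge : ∀ (n : ℤ) (v : X), n • v =
      @HSMul.hSMul ℤ X X
        (@instHSMul ℤ X (‹Module ℤ X›.toDistribMulAction.toMulAction.toSMul)) n v := by
    intro n v
    rw [← Int.cast_smul_eq_zsmul ℤ n v, Int.cast_id]
  -- the Γ-action commutes with ℤ-scalars (for the given module action)
  have hcomm : ∀ (n : ℤ) (γ : Γ) (x : X),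
      γ • (@HSMul.hSMul ℤ X X
        (@instHSMul ℤ X (‹Module ℤ X›.toDistribMulAction.toMulAction.toSMul)) n x) =
      @HSMul.hSMul ℤ X X
        (@instHSMul ℤ X (‹Module ℤ X›.toDistribMulAction.toMulAction.toSMul)) n (γ • x) := by
    intro n γ x
    rw [← bridge, ← bridge]
    exact map_zsmul (DistribMulAction.toAddMonoidHom X γ) n x
  -- The norm map as a ℤ-linear map
  let N : X →ₗ[ℤ] X :=
    { toFun := fun x => ∑ γ : Γ, γ • x
      map_add' := by
        intro a b
        simp [smul_add, Finset.sum_add_distrib]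
      map_smul' := by
        intro n x
        simp only [RingHom.id_apply, Finset.smul_sum]
        exact Finset.sum_congr rfl fun γ _ => hcomm n γ x }
  have hNapp : ∀ x : X, N x = ∑ γ : Γ, γ • x := fun _ => rfl
  -- N is Γ-invariant
  have hNinv : ∀ (γ : Γ) (x : X), N (γ • x) = N x := by
    intro γ x
    simp only [hNapp]
    refine Fintype.sum_equiv (Equiv.mulRight γ) _ _ fun γ' => ?_
    simp [smul_smul]
  -- N kills C
  have hNC : ∀ z ∈ C, N z = 0 := by
    intro z hz
    rw [hC] at hz
    have : Submodule.span ℤ {z : X | ∃ (γ : Γ) (x : X), z = x - γ • x} ≤ LinearMap.ker N := by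
      rw [Submodule.span_le]
      rintro _ ⟨γ, x, rfl⟩
      simp [LinearMap.mem_ker, map_sub, hNinv]
    simpa using this hz
  intro y _
  constructor
  · rintro ⟨⟨n, hn⟩, h⟩
    have hny : n • y ∈ C := by
      rwa [Submonoid.mk_smul, ← Submodule.Quotient.mk_smul, Submodule.Quotient.mk_eq_zero] at h
    rw [bridge] at hny
    have h0 : _ := (N.map_smul n y).symm.trans (hNC _ hny)
    haveI : Module.IsTorsionFree ℤ X := inferInstance
    have hn0 : n ≠ 0 := nonZeroDivisors.coe_ne_zero ⟨n, hn⟩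
    have h1 : N y = 0 := smul_right_injective X hn0 (by simpa using h0)
    rw [hNapp] at h1; exact h1
  · intro hN
    refine ⟨⟨(Fintype.card Γ : ℤ), mem_nonZeroDivisors_of_ne_zero (by
      exact_mod_cast Fintype.card_ne_zero)⟩, ?_⟩
    have hmem : (Fintype.card Γ : ℤ) • y ∈ C := by
      have key : (Fintype.card Γ : ℤ) • y = ∑ γ : Γ, (y - γ • y) := by
        rw [Finset.sum_sub_distrib, hN, sub_zero, Finset.sum_const,
          Finset.card_univ, natCast_zsmul]
      rw [key, hC]
      exact Submodule.sum_mem _ fun γ _ => Submodule.subset_span ⟨γ, y, rfl⟩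
    rw [Submonoid.mk_smul, ← Submodule.Quotient.mk_smul]
    exact (Submodule.Quotient.mk_eq_zero C).mpr hmem
end

section
/- Let n ≥ 5 be an integer and let Φ⁺ = {e_i − e_j : 1 ≤ i < j ≤ n} ∪ {e_i + e_j : 1 ≤ i < j ≤ n} ⊂ ℝ^n be the positive roots of D_n. Fix a real number M > n/2, signs ν_2,…,ν_n ∈ {±1}, and t ∈ ℕ with t ≥ 1. Let λ ∈ ℝ^n satisfy |λ − (6t, 2tν_2, …, 2tν_n)|₁ < t/M, where |·|₁ is the ℓ¹-norm. Let m : Φ⁺ → ℕ satisfy Σ_{β∈Φ⁺} m(β)·β = λ, and suppose there is a subset I ⊆ {2,…,n} with |I| = n−2 such that m(e_1 + ν_i e_i) = 0 for all i ∈ I. Then Σ_{β∈Φ⁺} m(β) ≥ (n + 4 − n/(2M))·t. -/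
/-- Let `n ≥ 5`, `Φ⁺ = {e_i ± e_j : i < j} ⊂ ℝ^n` the positive roots of
`D_n`, `M > n/2`, signs `ν_2,…,ν_n ∈ {±1}`, `t ≥ 1`.  If `λ ∈ ℝ^n` satisfies
`|λ − (6t, 2tν_2, …, 2tν_n)|₁ < t/M`, `m : Φ⁺ → ℕ` is a Kostant partition of `λ`
(i.e. `∑ m(β)·β = λ`), and `m` vanishes on `e_1 + ν_i e_i` for all `i` in a subset
`I ⊆ {2,…,n}` of size `n−2`, then `∑_β m(β) ≥ (n + 4 − n/(2M))·t`. -/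
theorem stmt17 (n : ℕ) (hn : 5 ≤ n) (M : ℝ) (hM : (n : ℝ) / 2 < M)
    (ν : Fin n → ℝ) (hν : ∀ i : Fin n, 1 ≤ (i : ℕ) → ν i = 1 ∨ ν i = -1)
    (t : ℕ) (ht : 1 ≤ t)
    (Φ : Finset (Fin n → ℝ))
    (hΦ : Φ =
      (((Finset.univ : Finset (Fin n × Fin n)).filter fun p => p.1 < p.2).image
          fun p => Pi.single p.1 (1 : ℝ) - Pi.single p.2 (1 : ℝ)) ∪
        (((Finset.univ : Finset (Fin n × Fin n)).filter fun p => p.1 < p.2).image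
          fun p => Pi.single p.1 (1 : ℝ) + Pi.single p.2 (1 : ℝ)))
    (lam : Fin n → ℝ)
    (hlam : ∑ i, |lam i - (if (i : ℕ) = 0 then 6 * (t : ℝ) else 2 * t * ν i)| < t / M)
    (m : (Fin n → ℝ) → ℕ)
    (hm : ∑ β ∈ Φ, (m β : ℝ) • β = lam)
    (I : Finset (Fin n)) (hIcard : I.card = n - 2) (hI1 : ∀ i ∈ I, 1 ≤ (i : ℕ))
    (hvanish : ∀ i ∈ I,
      m (Pi.single (⟨0, by omega⟩ : Fin n) (1 : ℝ) + ν i • (Pi.single i (1 : ℝ) : Fin n → ℝ)) = 0) :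
    ((n : ℝ) + 4 - n / (2 * M)) * t ≤ ∑ β ∈ Φ, (m β : ℝ) := by
  have hn2 : (2:ℝ) ≤ n := by exact_mod_cast (by omega : 2 ≤ n)
  have hM0 : (0:ℝ) < M := lt_of_le_of_lt (by positivity) hM
  have ht0 : (0:ℝ) < t := by exact_mod_cast ht
  set z : Fin n := ⟨0, by omega⟩ with hz
  set c : Fin n → ℝ := fun i => if (i:ℕ) = 0 then 1 else if i ∈ I then ν i / 2 else 0 with hc
  have hzI : z ∉ I := fun h => by have := hI1 z h; simp [hz] at this
  set μ : Fin n → ℝ := fun i => if (i : ℕ) = 0 then 6 * (t : ℝ) else 2 * t * ν i with hμdef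
  -- dot products with single vectors
  have dotsub : ∀ p q : Fin n, (∑ i, c i * ((Pi.single p (1:ℝ) : Fin n → ℝ) i - (Pi.single q (1:ℝ) : Fin n → ℝ) i)) = c p - c q := by
    intro p q
    have h1 : ∀ i : Fin n, c i * ((Pi.single p (1:ℝ) : Fin n → ℝ) i - (Pi.single q (1:ℝ) : Fin n → ℝ) i)
        = (if i = p then c i else 0) - (if i = q then c i else 0) := by
      intro i
      by_cases h : i = p <;> by_cases h' : i = q <;>
        simp [h, h', Pi.single_apply, mul_sub]
    rw [Finset.sum_congr rfl fun i _ => h1 i, Finset.sum_sub_distrib,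
      Finset.sum_ite_eq' Finset.univ p c, Finset.sum_ite_eq' Finset.univ q c]
    simp
  have dotadd : ∀ p q : Fin n, (∑ i, c i * ((Pi.single p (1:ℝ) : Fin n → ℝ) i + (Pi.single q (1:ℝ) : Fin n → ℝ) i)) = c p + c q := by
    intro p q
    have h1 : ∀ i : Fin n, c i * ((Pi.single p (1:ℝ) : Fin n → ℝ) i + (Pi.single q (1:ℝ) : Fin n → ℝ) i)
        = (if i = p then c i else 0) + (if i = q then c i else 0) := by
      intro i
      by_cases h : i = p <;> by_cases h' : i = q <;>
        simp [h, h', Pi.single_apply, mul_add]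
    rw [Finset.sum_congr rfl fun i _ => h1 i, Finset.sum_add_distrib,
      Finset.sum_ite_eq' Finset.univ p c, Finset.sum_ite_eq' Finset.univ q c]
    simp
  have habs : ∀ q : Fin n, 1 ≤ (q:ℕ) → |c q| ≤ 1/2 := by
    intro q hq
    have hq0 : (q:ℕ) ≠ 0 := by omega
    by_cases hqI : q ∈ I
    · rcases hν q hq with h1 | h1 <;> simp [hc, hq0, hqI, h1, abs_le] <;> norm_num
    · simp [hc, hq0, hqI]
  -- key per-root bound
  have key : ∀ β ∈ Φ, (m β : ℝ) * (∑ i, c i * β i) ≤ (m β : ℝ) := by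
    intro β hβ
    rw [hΦ] at hβ
    rcases Finset.mem_union.mp hβ with h | h <;>
      obtain ⟨p, hp, rfl⟩ := Finset.mem_image.mp h <;>
      have hpq : (p.1 : ℕ) < (p.2 : ℕ) := (Finset.mem_filter.mp hp).2
    · -- minus case
      simp only [Pi.sub_apply]
      rw [dotsub]
      by_cases hp0 : (p.1 : ℕ) = 0
      · have hp1z : p.1 = z := Fin.ext hp0
        have hq1 : 1 ≤ (p.2 : ℕ) := by omega
        by_cases hqI : p.2 ∈ I ∧ ν p.2 = -1
        · have hmz : m (Pi.single p.1 (1:ℝ) - Pi.single p.2 1) = 0 := by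
            have hv := hvanish p.2 hqI.1
            rw [hqI.2] at hv
            have harg : Pi.single (z : Fin n) (1:ℝ) + (-1 : ℝ) • (Pi.single p.2 (1:ℝ) : Fin n → ℝ)
                = Pi.single p.1 (1:ℝ) - Pi.single p.2 1 := by
              rw [hp1z]; ext j; simp [sub_eq_add_neg]
            rw [harg] at hv
            exact hv
          simp [hmz]
        · have hcp1 : c p.1 = 1 := by simp [hc, hp0]
          have hcq0 : 0 ≤ c p.2 := by
            have hq0 : (p.2:ℕ) ≠ 0 := by omega
            by_cases hI2 : p.2 ∈ I
            · rcases hν p.2 hq1 with h1 | h1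
              · norm_num [hc, hq0, hI2, h1]
              · exact absurd ⟨hI2, h1⟩ hqI
            · simp [hc, hq0, hI2]
          have hle : c p.1 - c p.2 ≤ 1 := by rw [hcp1]; linarith
          nlinarith [Nat.cast_nonneg (m (Pi.single p.1 (1:ℝ) - Pi.single p.2 1)) (α := ℝ)]
      · have h1 := habs p.1 (by omega)
        have h2 := habs p.2 (by omega)
        have hle : c p.1 - c p.2 ≤ 1 := by
          rcases abs_le.mp h1 with ⟨_, _⟩; rcases abs_le.mp h2 with ⟨_, _⟩; linarith
        nlinarith [Nat.cast_nonneg (m (Pi.single p.1 (1:ℝ) - Pi.single p.2 1)) (α := ℝ)]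
    · -- plus case
      simp only [Pi.add_apply]
      rw [dotadd]
      by_cases hp0 : (p.1 : ℕ) = 0
      · have hp1z : p.1 = z := Fin.ext hp0
        have hq1 : 1 ≤ (p.2 : ℕ) := by omega
        by_cases hqI : p.2 ∈ I ∧ ν p.2 = 1
        · have hmz : m (Pi.single p.1 (1:ℝ) + Pi.single p.2 1) = 0 := by
            have hv := hvanish p.2 hqI.1
            rw [hqI.2] at hv
            have harg : Pi.single (z : Fin n) (1:ℝ) + (1 : ℝ) • (Pi.single p.2 (1:ℝ) : Fin n → ℝ)
                = Pi.single p.1 (1:ℝ) + Pi.single p.2 1 := by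
              rw [hp1z]; simp
            rw [harg] at hv
            exact hv
          simp [hmz]
        · have hcp1 : c p.1 = 1 := by simp [hc, hp0]
          have hcq0 : c p.2 ≤ 0 := by
            have hq0 : (p.2:ℕ) ≠ 0 := by omega
            by_cases hI2 : p.2 ∈ I
            · rcases hν p.2 hq1 with h1 | h1
              · exact absurd ⟨hI2, h1⟩ hqI
              · simp [hc, hq0, hI2, h1]; norm_num
            · simp [hc, hq0, hI2]
          have hle : c p.1 + c p.2 ≤ 1 := by rw [hcp1]; linarith
          nlinarith [Nat.cast_nonneg (m (Pi.single p.1 (1:ℝ) + Pi.single p.2 1)) (α := ℝ)]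
      · have h1 := habs p.1 (by omega)
        have h2 := habs p.2 (by omega)
        have hle : c p.1 + c p.2 ≤ 1 := by
          rcases abs_le.mp h1 with ⟨_, _⟩; rcases abs_le.mp h2 with ⟨_, _⟩; linarith
        nlinarith [Nat.cast_nonneg (m (Pi.single p.1 (1:ℝ) + Pi.single p.2 1)) (α := ℝ)]
  -- rearrange the Kostant sum
  have rearr : ∑ i, c i * lam i = ∑ β ∈ Φ, (m β : ℝ) * (∑ i, c i * β i) := by
    rw [← hm]
    calc ∑ i, c i * (∑ β ∈ Φ, (m β:ℝ) • β) i
        = ∑ i, ∑ β ∈ Φ, c i * ((m β:ℝ) * β i) := by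
          refine Finset.sum_congr rfl fun i _ => ?_
          rw [Finset.sum_apply, Finset.mul_sum]
          refine Finset.sum_congr rfl fun β _ => ?_
          simp [smul_eq_mul]
      _ = ∑ β ∈ Φ, ∑ i, c i * ((m β:ℝ) * β i) := Finset.sum_comm
      _ = ∑ β ∈ Φ, (m β:ℝ) * ∑ i, c i * β i := by
          refine Finset.sum_congr rfl fun β _ => ?_
          rw [Finset.mul_sum]
          refine Finset.sum_congr rfl fun i _ => by ring
  have hsum1 : ∑ i, c i * lam i ≤ ∑ β ∈ Φ, (m β : ℝ) := by
    rw [rearr]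
    exact Finset.sum_le_sum key
  -- evaluate c · μ
  have hcμ : ∑ i, c i * μ i = ((n:ℝ) + 4) * t := by
    have hptwise : ∀ i : Fin n, c i * μ i
        = (if i = z then 6 * (t:ℝ) else 0) + (if i ∈ I then (t:ℝ) else 0) := by
      intro i
      by_cases h0 : (i:ℕ) = 0
      · have hiz : i = z := Fin.ext h0
        simp [hc, hμdef, h0, hiz, hzI, (show (z:ℕ) = 0 from rfl)]
      · have hne : i ≠ z := fun h => h0 (by rw [h])
        by_cases hI2 : i ∈ I
        · rcases hν i (by omega) with h1 | h1 <;>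
            simp [hc, hμdef, h0, hI2, hne, h1] <;> ring
        · simp [hc, hμdef, h0, hI2, hne]
    rw [Finset.sum_congr rfl fun i _ => hptwise i, Finset.sum_add_distrib,
      Finset.sum_ite_eq' Finset.univ z fun _ => 6 * (t:ℝ)]
    have h2 : ∑ i : Fin n, (if i ∈ I then (t:ℝ) else 0) = I.card * t := by
      rw [Finset.sum_ite_mem, Finset.univ_inter, Finset.sum_const, nsmul_eq_mul]
    rw [h2]
    have hcard : ((I.card : ℝ)) = (n:ℝ) - 2 := by
      rw [hIcard]
      push_cast [Nat.cast_sub (by omega : 2 ≤ n)]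
      ring
    rw [hcard]
    simp
    ring
  -- error bound
  have herr : |∑ i, c i * (lam i - μ i)| ≤ ∑ i, |lam i - μ i| := by
    refine (Finset.abs_sum_le_sum_abs _ _).trans (Finset.sum_le_sum fun i _ => ?_)
    rw [abs_mul]
    have habs1 : |c i| ≤ 1 := by
      by_cases h0 : (i:ℕ) = 0
      · simp [hc, h0]
      · linarith [habs i (by omega)]
    nlinarith [abs_nonneg (lam i - μ i)]
  have hsplit : ∑ i, c i * lam i = ∑ i, c i * μ i + ∑ i, c i * (lam i - μ i) := by
    rw [← Finset.sum_add_distrib]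
    exact Finset.sum_congr rfl fun i _ => by ring
  have hlam' : ∑ i, |lam i - μ i| < t / M := hlam
  have hB : ((n:ℝ) + 4) * t - t / M ≤ ∑ i, c i * lam i := by
    rw [hsplit, hcμ]
    have := abs_le.mp herr
    linarith [this.1]
  have hA : t / M ≤ (n:ℝ) / (2*M) * t := by
    rw [div_mul_eq_mul_div, div_le_div_iff₀ hM0 (by positivity : (0:ℝ) < 2*M)]
    nlinarith [mul_nonneg (mul_nonneg (by linarith : (0:ℝ) ≤ (n:ℝ) - 2) ht0.le) hM0.le]
  calc ((n : ℝ) + 4 - n / (2 * M)) * t = ((n:ℝ) + 4) * t - ((n:ℝ) / (2*M)) * t := by ring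
    _ ≤ ((n:ℝ) + 4) * t - t / M := by linarith
    _ ≤ ∑ i, c i * lam i := hB
    _ ≤ ∑ β ∈ Φ, (m β : ℝ) := hsum1
end
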